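/- Let R be a Noetherian local domain with maximal ideal m and fraction field Q, and let R̃ be an intermediate ring R ⊆ R̃ ⊆ Q that is a discrete valuation ring with maximal ideal n and is finitely generated as an R-module; assume the inclusion R ⊆ R̃ induces an isomorphism of residue fields, i.e. for every u ∈ R̃ there exists h ∈ R with u − h ∈ n. Let C = {x ∈ R : x·R̃ ⊆ R} be the conductor and let I be a nonzero ideal of R with I⁻¹ = R : I = {x ∈ Q : x·I ⊆ R}. Then the following are equivalent: (i) tr(I) = C; (ii) I⁻¹ : I⁻¹ = R̃ (as subsets of Q); (iii) I⁻¹ is isomorphic to R̃ as an R-module. -/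

import Mathlib

set_option synthInstance.maxHeartbeats 1000000
set_option maxHeartbeats 1000000

open IsLocalRing

namespace TraceCond

/-- The trace ideal of an ideal `I` of `R`: the sum `Σ_φ φ(I)` over all
`R`-linear maps `φ : I → R`. -/
noncomputable def traceIdeal {R : Type*} [CommRing R] (I : Ideal R) : Ideal R :=
  ⨆ φ : ↥I →ₗ[R] R, LinearMap.range φ

/-- The conductor `C_{R̃/R} = {x ∈ R : x·R̃ ⊆ R}` of an intermediate ring
`R ⊆ R̃ ⊆ Q`. -/
def conductorSet (R : Type*) [CommRing R] {Q : Type*} [CommRing Q] [Algebra R Q]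
    (Rt : Subalgebra R Q) : Set R :=
  {x : R | ∀ y ∈ Rt, ∃ r : R, algebraMap R Q r = algebraMap R Q x * y}

end TraceCond

open TraceCond

/-- The fractionary ideal `I⁻¹ = R : I = {x ∈ Q(R) : x·I ⊆ R}`, as an
`R`-submodule of `Q(R)`. -/
noncomputable def invIdeal (R : Type*) [CommRing R] [IsDomain R] (I : Ideal R) :
    Submodule R (FractionRing R) where
  carrier := {x : FractionRing R | ∀ i ∈ I,
    ∃ r : R, algebraMap R (FractionRing R) r = x * algebraMap R (FractionRing R) i}
  add_mem' := by
    intro x y hx hy i hi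
    obtain ⟨r, hr⟩ := hx i hi
    obtain ⟨s, hs⟩ := hy i hi
    exact ⟨r + s, by rw [map_add, hr, hs, add_mul]⟩
  zero_mem' := by
    intro i hi
    exact ⟨0, by simp⟩
  smul_mem' := by
    intro c x hx i hi
    obtain ⟨r, hr⟩ := hx i hi
    refine ⟨c * r, ?_⟩
    rw [map_mul, hr, Algebra.smul_def]
    ring

section Aux

variable {R : Type*} [CommRing R] [IsDomain R]

private lemma finj : Function.Injective (algebraMap R (FractionRing R)) :=
  IsFractionRing.injective R (FractionRing R)

/-- The image of the ideal `I` inside the fraction field. -/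
private noncomputable def Ik (I : Ideal R) : Submodule R (FractionRing R) :=
  Submodule.map (Algebra.linearMap R (FractionRing R)) I

/-- The conductor, as a submodule of the fraction field. -/
private def Ck (Rt : Subalgebra R (FractionRing R)) : Submodule R (FractionRing R) where
  carrier := {z : FractionRing R | ∀ y ∈ Rt,
    ∃ r : R, algebraMap R (FractionRing R) r = z * y}
  add_mem' := by
    intro a b ha hb y hy
    obtain ⟨r, hr⟩ := ha y hy
    obtain ⟨s, hs⟩ := hb y hy
    exact ⟨r + s, by rw [map_add, hr, hs, add_mul]⟩
  zero_mem' := by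
    intro y hy
    exact ⟨0, by simp⟩
  smul_mem' := by
    intro c a ha y hy
    obtain ⟨r, hr⟩ := ha y hy
    refine ⟨c * r, ?_⟩
    rw [map_mul, hr, Algebra.smul_def]
    ring

private lemma mem_Ck {Rt : Subalgebra R (FractionRing R)} {z : FractionRing R} :
    z ∈ Ck Rt ↔ ∀ y ∈ Rt, ∃ r : R, algebraMap R (FractionRing R) r = z * y :=
  Iff.rfl

private lemma mem_invIdeal {I : Ideal R} {x : FractionRing R} :
    x ∈ invIdeal R I ↔ ∀ i ∈ I,
      ∃ r : R, algebraMap R (FractionRing R) r = x * algebraMap R (FractionRing R) i :=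
  Iff.rfl

private lemma one_mem_inv (I : Ideal R) : (1 : FractionRing R) ∈ invIdeal R I :=
  fun i _ => ⟨i, (one_mul _).symm⟩

private lemma inv_ne_bot (I : Ideal R) : invIdeal R I ≠ ⊥ := by
  intro h
  have h1 := one_mem_inv (R := R) I
  rw [h, Submodule.mem_bot] at h1
  exact one_ne_zero h1

/-- `K` is a fraction field of any intermediate ring. -/
private theorem fracRt (Rt : Subalgebra R (FractionRing R)) [IsDomain ↥Rt] :
    IsFractionRing ↥Rt (FractionRing R) where
  map_units := fun ⟨y, hy⟩ => by
    refine (Units.mk0 (y : FractionRing R) ?_).isUnit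
    intro hc
    exact nonZeroDivisors.ne_zero hy (Subtype.ext hc)
  surj := by
    intro z
    obtain ⟨⟨r, s⟩, h⟩ := IsLocalization.surj (nonZeroDivisors R) z
    have hs0 : algebraMap R (FractionRing R) (s : R) ≠ 0 := by
      refine fun hc => nonZeroDivisors.ne_zero s.2 (finj ?_)
      rw [hc, map_zero]
    refine ⟨⟨⟨algebraMap R (FractionRing R) r, Rt.algebraMap_mem r⟩,
      ⟨⟨algebraMap R (FractionRing R) (s : R), Rt.algebraMap_mem (s : R)⟩,
        mem_nonZeroDivisors_iff_ne_zero.2 (fun hc => hs0 (congrArg Subtype.val hc))⟩⟩, ?_⟩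
    exact h
  exists_of_eq := by
    intro a b h
    exact ⟨1, by rw [show a = b from Subtype.ext h]⟩

private lemma mem_of_isIntegral (Rt : Subalgebra R (FractionRing R)) [IsDomain ↥Rt]
    [IsDiscreteValuationRing ↥Rt] {x : FractionRing R} (hx : IsIntegral R x) : x ∈ Rt := by
  haveI := fracRt (R := R) Rt
  obtain ⟨y, hy⟩ := IsIntegrallyClosed.isIntegral_iff.mp (hx.tower_top (A := ↥Rt))
  exact hy ▸ y.2

private lemma map_traceIdeal (I : Ideal R) (hI : I ≠ ⊥) :
    Submodule.map (Algebra.linearMap R (FractionRing R)) (traceIdeal I)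
      = invIdeal R I * Ik I := by
  obtain ⟨d, hdI, hd0⟩ := Submodule.exists_mem_ne_zero_of_ne_bot hI
  have hfd : algebraMap R (FractionRing R) d ≠ 0 := fun h => hd0 (finj (by rw [h, map_zero]))
  apply le_antisymm
  · rintro _ ⟨x, hx, rfl⟩
    refine Submodule.iSup_induction (x := x)
      (motive := fun a => algebraMap R (FractionRing R) a ∈ invIdeal R I * Ik I) _ hx ?_ ?_ ?_
    · rintro φ _ ⟨j, rfl⟩
      have key : ∀ j : ↥I, d * φ j = (j : R) * φ ⟨d, hdI⟩ := by
        intro j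
        have h1 : (d • j : ↥I) = ((j : R) • (⟨d, hdI⟩ : ↥I)) :=
          Subtype.ext (by simp [smul_eq_mul, mul_comm])
        calc d * φ j = d • φ j := (smul_eq_mul _ _).symm
          _ = φ (d • j) := (map_smul φ d j).symm
          _ = φ ((j : R) • (⟨d, hdI⟩ : ↥I)) := by rw [h1]
          _ = (j : R) • φ ⟨d, hdI⟩ := map_smul φ _ _
          _ = (j : R) * φ ⟨d, hdI⟩ := smul_eq_mul _ _
      set q : FractionRing R :=
        algebraMap R (FractionRing R) (φ ⟨d, hdI⟩) / algebraMap R (FractionRing R) d with hq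
      have hq_mul : ∀ j : ↥I,
          q * algebraMap R (FractionRing R) (j : R) = algebraMap R (FractionRing R) (φ j) := by
        intro j
        rw [hq, div_mul_eq_mul_div, div_eq_iff hfd, ← map_mul, ← map_mul]
        exact congrArg _ (by rw [mul_comm (φ ⟨d, hdI⟩) (j : R), ← key j, mul_comm])
      have hqJ : q ∈ invIdeal R I := by
        intro i hi
        exact ⟨φ ⟨i, hi⟩, (hq_mul ⟨i, hi⟩).symm⟩
      have hmm : q * algebraMap R (FractionRing R) (j : R) ∈ invIdeal R I * Ik I :=
        Submodule.mul_mem_mul hqJ ⟨(j : R), j.2, rfl⟩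
      rwa [hq_mul j] at hmm
    · show algebraMap R (FractionRing R) 0 ∈ invIdeal R I * Ik I
      rw [map_zero]; exact Submodule.zero_mem _
    · intro a b ha hb
      show algebraMap R (FractionRing R) (a + b) ∈ invIdeal R I * Ik I
      rw [map_add]; exact Submodule.add_mem _ ha hb
  · refine Submodule.mul_le.2 ?_
    rintro q hq _ ⟨i, hi, rfl⟩
    choose g hg using hq
    let φ : ↥I →ₗ[R] R :=
      { toFun := fun j => g (j : R) j.2
        map_add' := by
          intro a b
          apply finj
          rw [map_add, hg _ a.2, hg _ b.2, hg _ (a + b).2, Submodule.coe_add, map_add]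
          ring
        map_smul' := by
          intro r a
          apply finj
          rw [RingHom.id_apply, hg _ (r • a).2, SetLike.val_smul, smul_eq_mul,
            smul_eq_mul, map_mul, map_mul, hg _ a.2]
          ring }
    simp only [Algebra.linearMap_apply]
    refine ⟨φ ⟨i, hi⟩, ?_, ?_⟩
    · exact le_iSup (fun ψ : ↥I →ₗ[R] R => LinearMap.range ψ) φ ⟨⟨i, hi⟩, rfl⟩
    · exact hg i hi

private lemma A_iff (Rt : Subalgebra R (FractionRing R)) (I : Ideal R) (hI : I ≠ ⊥) :
    (traceIdeal I : Set R) = conductorSet R Rt ↔ invIdeal R I * Ik I = Ck Rt := by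
  rw [← map_traceIdeal I hI]
  constructor
  · intro h
    ext z
    constructor
    · rintro ⟨x, hx, rfl⟩
      have hx' : x ∈ conductorSet R Rt := by
        rw [← h]; exact hx
      exact hx'
    · intro hz
      obtain ⟨r, hr⟩ := hz 1 Rt.one_mem
      have hz' : z = algebraMap R (FractionRing R) r := (hr.trans (mul_one z)).symm
      subst hz'
      have hr' : r ∈ conductorSet R Rt := fun y hy => hz y hy
      have : r ∈ (traceIdeal I : Set R) := by rw [h]; exact hr'
      exact ⟨r, this, rfl⟩
  · intro h
    ext x
    constructor
    · intro hx
      have : algebraMap R (FractionRing R) x ∈ Ck Rt := by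
        rw [← h]; exact ⟨x, hx, rfl⟩
      exact fun y hy => this y hy
    · intro hx
      have hx' : algebraMap R (FractionRing R) x ∈ Ck Rt := fun y hy => hx y hy
      rw [← h] at hx'
      obtain ⟨x', hx'', hfx⟩ := hx'
      have : x' = x := finj hfx
      rwa [← this]

/-- Every nonzero finitely generated `Rt`-stable `R`-submodule of `K` is a free
`Rt`-module of rank one, for `Rt` a DVR. -/
private lemma principal (Rt : Subalgebra R (FractionRing R)) [IsDomain ↥Rt]
    [IsDiscreteValuationRing ↥Rt] (M : Submodule R (FractionRing R)) (hfg : M.FG)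
    (hne : M ≠ ⊥) (hstab : ∀ y ∈ Rt, ∀ x ∈ M, y * x ∈ M) :
    ∃ q : FractionRing R, q ≠ 0 ∧ ∀ z : FractionRing R, z ∈ M ↔ ∃ u ∈ Rt, z = q * u := by
  classical
  let M' : Submodule ↥Rt (FractionRing R) :=
    { carrier := (M : Set (FractionRing R))
      add_mem' := fun ha hb => M.add_mem ha hb
      zero_mem' := M.zero_mem
      smul_mem' := fun c x hx => by
        have h := hstab (c : FractionRing R) c.2 x hx
        simpa [Algebra.smul_def] using h }
  obtain ⟨S, hS⟩ := hfg
  have h1 : Submodule.span ↥Rt (S : Set (FractionRing R)) = M' := by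
    apply le_antisymm
    · exact Submodule.span_le.2 (fun x hx => show x ∈ M from hS ▸ Submodule.subset_span hx)
    · intro x hx
      have hx' : x ∈ Submodule.span R (S : Set (FractionRing R)) := by
        rw [hS]; exact hx
      exact Submodule.span_subset_span R ↥Rt _ hx'
  obtain ⟨b, hb⟩ := IsLocalization.exist_integer_multiples_of_finset (nonZeroDivisors R) S
  have hfb : algebraMap R (FractionRing R) (b : R) ≠ 0 := by
    refine fun hc => nonZeroDivisors.ne_zero b.2 (finj ?_)
    rw [hc, map_zero]
  let μ : FractionRing R →ₗ[↥Rt] FractionRing R :=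
    LinearMap.mulLeft ↥Rt (algebraMap R (FractionRing R) (b : R))
  let N : Submodule ↥Rt (FractionRing R) := M'.map μ
  have hNsub : ∀ z ∈ N, z ∈ Rt := by
    rintro _ ⟨x, hx, rfl⟩
    have hx' : x ∈ Submodule.span ↥Rt (S : Set (FractionRing R)) := by rw [h1]; exact hx
    show algebraMap R (FractionRing R) (b : R) * x ∈ Rt
    refine Submodule.span_induction
      (p := fun x _ => algebraMap R (FractionRing R) (b : R) * x ∈ Rt) ?_ ?_ ?_ ?_ hx'
    · intro s hs
      obtain ⟨r, hr⟩ := hb s hs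
      have heq : algebraMap R (FractionRing R) (b : R) * s = algebraMap R (FractionRing R) r := by
        rw [hr, Algebra.smul_def]
      show algebraMap R (FractionRing R) (b : R) * s ∈ Rt
      rw [heq]
      exact Rt.algebraMap_mem r
    · show algebraMap R (FractionRing R) (b : R) * 0 ∈ Rt
      rw [mul_zero]; exact Rt.zero_mem
    · intro u v _ _ hu hv
      show algebraMap R (FractionRing R) (b : R) * (u + v) ∈ Rt
      rw [mul_add]; exact Rt.add_mem hu hv
    · intro c u _ hu
      have heq : algebraMap R (FractionRing R) (b : R) * (c • u)
          = (c : FractionRing R) * (algebraMap R (FractionRing R) (b : R) * u) := by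
        rw [Algebra.smul_def]
        show algebraMap R (FractionRing R) (b : R) * ((c : FractionRing R) * u) = _
        ring
      show algebraMap R (FractionRing R) (b : R) * (c • u) ∈ Rt
      rw [heq]
      exact Rt.mul_mem c.2 hu
  let D : Ideal ↥Rt := N.comap (Algebra.linearMap ↥Rt (FractionRing R))
  have hmapD : ∀ z, z ∈ N ↔ ∃ u : ↥Rt, u ∈ D ∧ (u : FractionRing R) = z := by
    intro z
    constructor
    · intro hz
      exact ⟨⟨z, hNsub z hz⟩, hz, rfl⟩
    · rintro ⟨u, hu, rfl⟩
      exact hu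
  have hDP : D.IsPrincipal := IsPrincipalIdealRing.principal D
  set e := Submodule.IsPrincipal.generator D with he
  have hgen : Ideal.span {e} = D := Ideal.span_singleton_generator D
  have hD_ne : D ≠ ⊥ := by
    obtain ⟨x0, hx0M, hx00⟩ := Submodule.exists_mem_ne_zero_of_ne_bot hne
    intro hD
    have hmem : algebraMap R (FractionRing R) (b : R) * x0 ∈ N := ⟨x0, hx0M, rfl⟩
    obtain ⟨u, hu, huz⟩ := (hmapD _).1 hmem
    rw [hD, Submodule.mem_bot] at hu
    rw [hu] at huz
    exact mul_ne_zero hfb hx00 (by rw [← huz]; rfl)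
  have he0 : e ≠ 0 := by
    intro h
    apply hD_ne
    rw [← hgen, h, Ideal.span_singleton_eq_bot.2 rfl]
  have heK0 : (e : FractionRing R) ≠ 0 := fun h => he0 (Subtype.ext h)
  refine ⟨(e : FractionRing R) / algebraMap R (FractionRing R) (b : R),
    div_ne_zero heK0 hfb, ?_⟩
  intro z
  constructor
  · intro hz
    have hmem : algebraMap R (FractionRing R) (b : R) * z ∈ N := ⟨z, hz, rfl⟩
    obtain ⟨u, hu, huz⟩ := (hmapD _).1 hmem
    rw [← hgen, Ideal.mem_span_singleton] at hu
    obtain ⟨v, hv⟩ := hu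
    refine ⟨(v : FractionRing R), v.2, ?_⟩
    have h2 : algebraMap R (FractionRing R) (b : R) * z
        = (e : FractionRing R) * (v : FractionRing R) := by
      rw [← huz, hv]
      rfl
    rw [div_mul_eq_mul_div, eq_div_iff hfb, mul_comm z, h2]
  · rintro ⟨u, hu, rfl⟩
    have hmemD : (⟨u, hu⟩ * e : ↥Rt) ∈ D := by
      rw [← hgen]
      exact Ideal.mul_mem_left _ _ (Ideal.subset_span rfl)
    have hN : ((⟨u, hu⟩ * e : ↥Rt) : FractionRing R) ∈ N := hmemD
    obtain ⟨x, hxM, hx⟩ := hN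
    have hx' : algebraMap R (FractionRing R) (b : R) * x = u * (e : FractionRing R) := hx
    have : (e : FractionRing R) / algebraMap R (FractionRing R) (b : R) * u = x := by
      rw [div_mul_eq_mul_div, div_eq_iff hfb, mul_comm x _, hx']
      ring
    rw [this]
    exact hxM

private lemma inv_fg [IsNoetherianRing R] (I : Ideal R) (hI : I ≠ ⊥) : (invIdeal R I).FG := by
  obtain ⟨d, hdI, hd0⟩ := Submodule.exists_mem_ne_zero_of_ne_bot hI
  have hfd : algebraMap R (FractionRing R) d ≠ 0 := fun h => hd0 (finj (by rw [h, map_zero]))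
  let m : FractionRing R →ₗ[R] FractionRing R :=
    LinearMap.mulLeft R (algebraMap R (FractionRing R) d)
  have hinj : Function.Injective m := fun a b h => by
    have h' : algebraMap R (FractionRing R) d * a = algebraMap R (FractionRing R) d * b := h
    exact mul_left_cancel₀ hfd h'
  apply Submodule.fg_of_fg_map_injective m hinj
  have hle : Submodule.map m (invIdeal R I)
      ≤ LinearMap.range (Algebra.linearMap R (FractionRing R)) := by
    rintro _ ⟨x, hx, rfl⟩
    obtain ⟨r, hr⟩ := hx d hdI
    refine ⟨r, ?_⟩
    show algebraMap R (FractionRing R) r = algebraMap R (FractionRing R) d * x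
    rw [hr]; ring
  have hrange : (LinearMap.range (Algebra.linearMap R (FractionRing R))).FG := by
    rw [← Submodule.map_top]
    exact Submodule.FG.map _ (IsNoetherian.noetherian ⊤)
  haveI : IsNoetherian R ↥(LinearMap.range (Algebra.linearMap R (FractionRing R))) :=
    isNoetherian_of_fg_of_noetherian _ hrange
  have hfg2 := IsNoetherian.noetherian
    (Submodule.comap (LinearMap.range (Algebra.linearMap R (FractionRing R))).subtype
      (Submodule.map m (invIdeal R I)))
  have h2 := Submodule.FG.map
    ((LinearMap.range (Algebra.linearMap R (FractionRing R))).subtype) hfg2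
  rwa [Submodule.map_comap_subtype, inf_eq_right.2 hle] at h2

private lemma impl_A_B [IsNoetherianRing R] (Rt : Subalgebra R (FractionRing R))
    [IsDomain ↥Rt] [IsDiscreteValuationRing ↥Rt] (I : Ideal R) (hI : I ≠ ⊥)
    (h : invIdeal R I * Ik I = Ck Rt) :
    {x : FractionRing R | ∀ y ∈ invIdeal R I, x * y ∈ invIdeal R I}
      = (Rt : Set (FractionRing R)) := by
  ext x
  simp only [Set.mem_setOf_eq, SetLike.mem_coe]
  constructor
  · intro hx
    refine mem_of_isIntegral Rt ?_
    refine isIntegral_of_smul_mem_submodule (invIdeal R I) (inv_ne_bot I) (inv_fg I hI) x ?_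
    intro n hn
    rw [smul_eq_mul]
    exact hx n hn
  · intro hx y hy i hi
    have h1 : y * algebraMap R (FractionRing R) i ∈ Ck Rt := by
      rw [← h]
      exact Submodule.mul_mem_mul hy ⟨i, hi, rfl⟩
    obtain ⟨r, hr⟩ := h1 x hx
    exact ⟨r, by rw [hr]; ring⟩

private lemma impl_B_A [IsNoetherianRing R] (Rt : Subalgebra R (FractionRing R))
    [IsDomain ↥Rt] [IsDiscreteValuationRing ↥Rt] [Module.Finite R ↥Rt]
    (I : Ideal R) (hI : I ≠ ⊥)
    (hE : {x : FractionRing R | ∀ y ∈ invIdeal R I, x * y ∈ invIdeal R I}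
      = (Rt : Set (FractionRing R))) :
    invIdeal R I * Ik I = Ck Rt := by
  have hstab : ∀ y ∈ Rt, ∀ w ∈ invIdeal R I, y * w ∈ invIdeal R I := by
    intro y hy w hw
    have hy' : y ∈ {x : FractionRing R | ∀ y ∈ invIdeal R I, x * y ∈ invIdeal R I} := by
      rw [hE]; exact hy
    exact hy' w hw
  obtain ⟨d, hdI, hd0⟩ := Submodule.exists_mem_ne_zero_of_ne_bot hI
  have hfd : algebraMap R (FractionRing R) d ≠ 0 := fun h => hd0 (finj (by rw [h, map_zero]))
  set R' : Submodule R (FractionRing R) := Subalgebra.toSubmodule Rt with hR'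
  have hvr : LinearMap.range Rt.val.toLinearMap = R' := by
    ext z
    constructor
    · rintro ⟨u, rfl⟩; exact u.2
    · intro hz; exact ⟨⟨z, hz⟩, rfl⟩
  have hR'fg : R'.FG := by
    have htop : (⊤ : Submodule R ↥Rt).FG := Module.finite_def.mp inferInstance
    have h2 := htop.map Rt.val.toLinearMap
    rwa [Submodule.map_top, hvr] at h2
  have hIkfg : (Ik I).FG := (IsNoetherian.noetherian I).map _
  set M := Ik I * R' with hM
  have hone : (1 : FractionRing R) ∈ R' := Rt.one_mem
  have hMfg : M.FG := hIkfg.mul hR'fg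
  have hMne : M ≠ ⊥ := by
    intro h
    have hmem : algebraMap R (FractionRing R) d * 1 ∈ M :=
      Submodule.mul_mem_mul ⟨d, hdI, rfl⟩ hone
    rw [h, Submodule.mem_bot, mul_one] at hmem
    exact hfd hmem
  have hMstab : ∀ y ∈ Rt, ∀ x ∈ M, y * x ∈ M := by
    intro y hy x hx
    refine Submodule.mul_induction_on hx ?_ ?_
    · intro a ha c hc
      have heq : y * (a * c) = a * (y * c) := by ring
      rw [heq]
      exact Submodule.mul_mem_mul ha (Rt.mul_mem hy hc)
    · intro a c h1 h2
      rw [mul_add]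
      exact M.add_mem h1 h2
  obtain ⟨a, ha0, haM⟩ := principal Rt M hMfg hMne hMstab
  apply le_antisymm
  · refine Submodule.mul_le.2 ?_
    rintro q hq _ ⟨i, hi, rfl⟩
    simp only [Algebra.linearMap_apply]
    intro y hy
    obtain ⟨r, hr⟩ := hstab y hy q hq i hi
    exact ⟨r, by rw [hr]; ring⟩
  · intro c hc
    have haM' : a ∈ M := (haM a).2 ⟨1, Rt.one_mem, (mul_one a).symm⟩
    have hcaJ : c / a ∈ invIdeal R I := by
      intro i hi
      have hiIk : algebraMap R (FractionRing R) i ∈ Ik I := ⟨i, hi, by simp⟩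
      have hiM : algebraMap R (FractionRing R) i ∈ M := by
        have := Submodule.mul_mem_mul hiIk hone
        rwa [mul_one] at this
      obtain ⟨u, hu, hui⟩ := (haM _).1 hiM
      obtain ⟨r, hr⟩ := hc u hu
      refine ⟨r, ?_⟩
      rw [hui, hr]
      field_simp
    have hcM : c ∈ invIdeal R I * M := by
      have h2 := Submodule.mul_mem_mul hcaJ haM'
      rwa [div_mul_cancel₀ c ha0] at h2
    have hle : invIdeal R I * M ≤ invIdeal R I * Ik I := by
      have h1 : invIdeal R I * M = invIdeal R I * R' * Ik I := by
        rw [hM, mul_comm (Ik I) R', ← mul_assoc]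
      rw [h1]
      refine mul_le_mul_left ?_ _
      refine Submodule.mul_le.2 ?_
      intro q hq y hy
      rw [mul_comm]
      exact hstab y hy q hq
    exact hle hcM

private lemma impl_B_C [IsNoetherianRing R] (Rt : Subalgebra R (FractionRing R))
    [IsDomain ↥Rt] [IsDiscreteValuationRing ↥Rt] (I : Ideal R) (hI : I ≠ ⊥)
    (hE : {x : FractionRing R | ∀ y ∈ invIdeal R I, x * y ∈ invIdeal R I}
      = (Rt : Set (FractionRing R))) :
    Nonempty (↥(invIdeal R I) ≃ₗ[R] ↥Rt) := by
  have hstab : ∀ y ∈ Rt, ∀ w ∈ invIdeal R I, y * w ∈ invIdeal R I := by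
    intro y hy w hw
    have hy' : y ∈ {x : FractionRing R | ∀ y ∈ invIdeal R I, x * y ∈ invIdeal R I} := by
      rw [hE]; exact hy
    exact hy' w hw
  obtain ⟨q, hq0, hq⟩ := principal Rt (invIdeal R I) (inv_fg I hI) (inv_ne_bot I) hstab
  let g : ↥Rt →ₗ[R] ↥(invIdeal R I) :=
    { toFun := fun u => ⟨q * (u : FractionRing R), (hq _).2 ⟨u, u.2, rfl⟩⟩
      map_add' := by
        intro u v
        apply Subtype.ext
        show q * ((u : FractionRing R) + (v : FractionRing R))
          = q * (u : FractionRing R) + q * (v : FractionRing R)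
        ring
      map_smul' := by
        intro r u
        apply Subtype.ext
        show q * ((r • u : ↥Rt) : FractionRing R) = r • (q * (u : FractionRing R))
        rw [show ((r • u : ↥Rt) : FractionRing R) = r • (u : FractionRing R) from rfl,
          Algebra.smul_def, Algebra.smul_def]
        ring }
  have hbij : Function.Bijective g := by
    constructor
    · intro u v huv
      have h1 : q * (u : FractionRing R) = q * (v : FractionRing R) :=
        congrArg Subtype.val huv
      exact Subtype.ext (mul_left_cancel₀ hq0 h1)
    · rintro ⟨x, hx⟩
      obtain ⟨u, hu, huq⟩ := (hq x).1 hx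
      exact ⟨⟨u, hu⟩, Subtype.ext huq.symm⟩
  exact ⟨(LinearEquiv.ofBijective g hbij).symm⟩

private lemma impl_C_B (Rt : Subalgebra R (FractionRing R)) (I : Ideal R)
    (hne : Nonempty (↥(invIdeal R I) ≃ₗ[R] ↥Rt)) :
    {x : FractionRing R | ∀ y ∈ invIdeal R I, x * y ∈ invIdeal R I}
      = (Rt : Set (FractionRing R)) := by
  obtain ⟨e⟩ := hne
  let ψ : ↥(invIdeal R I) →ₗ[R] FractionRing R := Rt.val.toLinearMap ∘ₗ e.toLinearMap
  have hψ_def : ∀ x : ↥(invIdeal R I), ψ x = ((e x : ↥Rt) : FractionRing R) := fun _ => rfl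
  have hψinj : Function.Injective ψ := by
    intro a b h
    exact e.injective (Subtype.ext h)
  have h1J : (1 : FractionRing R) ∈ invIdeal R I := one_mem_inv I
  set q : FractionRing R := ψ ⟨1, h1J⟩ with hqdef
  have hmul : ∀ x : ↥(invIdeal R I), ψ x = q * (x : FractionRing R) := by
    intro x
    obtain ⟨⟨r, s⟩, hrs⟩ := IsLocalization.surj (nonZeroDivisors R) (x : FractionRing R)
    have hs0 : algebraMap R (FractionRing R) (s : R) ≠ 0 := by
      refine fun hc => nonZeroDivisors.ne_zero s.2 (finj ?_)
      rw [hc, map_zero]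
    have hsx : ((s : R) • x : ↥(invIdeal R I)) = r • (⟨1, h1J⟩ : ↥(invIdeal R I)) := by
      apply Subtype.ext
      show (s : R) • (x : FractionRing R) = r • (1 : FractionRing R)
      rw [Algebra.smul_def, Algebra.smul_def, mul_one, mul_comm]
      exact hrs
    have h1 : algebraMap R (FractionRing R) (s : R) * ψ x
        = algebraMap R (FractionRing R) r * q := by
      have h2 := congrArg ψ hsx
      rw [map_smul, map_smul] at h2
      rw [← Algebra.smul_def, ← Algebra.smul_def]
      exact h2
    apply mul_left_cancel₀ hs0
    rw [h1, ← hrs]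
    ring
  have hq0 : q ≠ 0 := by
    intro h
    have h2 : (⟨1, h1J⟩ : ↥(invIdeal R I)) = 0 := by
      apply hψinj
      rw [← hqdef, h, map_zero]
    have h3 : (1 : FractionRing R) = 0 := congrArg Subtype.val h2
    exact one_ne_zero h3
  have hsurj : ∀ z, z ∈ Rt ↔ ∃ w ∈ invIdeal R I, z = q * w := by
    intro z
    constructor
    · intro hz
      obtain ⟨x, hx⟩ := e.surjective ⟨z, hz⟩
      refine ⟨(x : FractionRing R), x.2, ?_⟩
      rw [← hmul x, hψ_def, hx]
    · rintro ⟨w, hw, rfl⟩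
      have h2 : q * w = ψ ⟨w, hw⟩ := (hmul ⟨w, hw⟩).symm
      rw [h2, hψ_def]
      exact (e ⟨w, hw⟩).2
  ext x
  simp only [Set.mem_setOf_eq, SetLike.mem_coe]
  constructor
  · intro hx
    obtain ⟨w0, hw0, h1q⟩ := (hsurj 1).1 Rt.one_mem
    have hxw0 : x * w0 ∈ invIdeal R I := hx w0 hw0
    have hmem : q * (x * w0) ∈ Rt := (hsurj _).2 ⟨x * w0, hxw0, rfl⟩
    have heq : q * (x * w0) = x := by
      calc q * (x * w0) = x * (q * w0) := by ring
        _ = x * 1 := by rw [← h1q]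
        _ = x := mul_one x
    rwa [heq] at hmem
  · intro hx w hw
    have h1 : q * w ∈ Rt := (hsurj _).2 ⟨w, hw, rfl⟩
    have h2 : x * (q * w) ∈ Rt := Rt.mul_mem hx h1
    obtain ⟨w2, hw2, hkey⟩ := (hsurj _).1 h2
    have heq : x * w = w2 := by
      apply mul_left_cancel₀ hq0
      calc q * (x * w) = x * (q * w) := by ring
        _ = q * w2 := hkey
    rwa [heq]

end Aux

/-- for `R` a Noetherian local domain, `R ⊆ R̃ ⊆ Q(R)` with `R̃` a
DVR which is a finite `R`-module inducing an isomorphism of residue fields, and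
`I` a nonzero ideal of `R`, the following are equivalent:
(i) `tr(I) = C`;  (ii) `I⁻¹ : I⁻¹ = R̃`;  (iii) `I⁻¹ ≅ R̃` as `R`-modules. -/
theorem stmt_19 (R : Type*) [CommRing R] [IsDomain R] [IsNoetherianRing R]
    [IsLocalRing R]
    (Rt : Subalgebra R (FractionRing R)) [IsDomain ↥Rt]
    [IsDiscreteValuationRing ↥Rt] [Module.Finite R ↥Rt]
    (hres : ∀ u : ↥Rt, ∃ h : R,
      u - algebraMap R ↥Rt h ∈ IsLocalRing.maximalIdeal ↥Rt)
    (I : Ideal R) (hI : I ≠ ⊥) :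
    ((traceIdeal I : Set R) = conductorSet R Rt ↔
      {x : FractionRing R | ∀ y ∈ invIdeal R I, x * y ∈ invIdeal R I} =
        (Rt : Set (FractionRing R))) ∧
    ((traceIdeal I : Set R) = conductorSet R Rt ↔
      Nonempty (↥(invIdeal R I) ≃ₗ[R] ↥Rt)) := by
  have hAB : (traceIdeal I : Set R) = conductorSet R Rt ↔
      {x : FractionRing R | ∀ y ∈ invIdeal R I, x * y ∈ invIdeal R I} =
        (Rt : Set (FractionRing R)) := by
    constructor
    · intro h
      exact impl_A_B Rt I hI ((A_iff Rt I hI).1 h)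
    · intro h
      exact (A_iff Rt I hI).2 (impl_B_A Rt I hI h)
  refine ⟨hAB, hAB.trans ⟨fun h => impl_B_C Rt I hI h, fun h => impl_C_B Rt I h⟩⟩
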